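/- Let 0 < r_obs < x_n (i.e., the noise source lies strictly outside the spherical receiver of radius r_obs centered at the origin), and set r_dif = r_obs − x_n and r_sum = r_obs + x_n. Then ∫₀^∞ { (1/2)[erf((r_obs − x_n)/(2√τ)) + erf((r_obs + x_n)/(2√τ))] + (1/x_n)·√(τ/π)·[exp(−r_sum²/(4τ)) − exp(−r_dif²/(4τ))] } dτ = r_obs³/(3 x_n). -/

import Mathlib

set_option maxHeartbeats 1000000

open Real MeasureTheory
open Filter Set Topology

/-- The error function `erf a = (2/√π) ∫₀^a exp(−b²) db`. -/
noncomputable def erf (a : ℝ) : ℝ := (2 / Real.sqrt π) * ∫ b in (0:ℝ)..a, Real.exp (-b^2)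

lemma cont_gauss : Continuous fun b : ℝ => Real.exp (-b^2) := by continuity

lemma erf_hasDerivAt (a : ℝ) :
    HasDerivAt erf (2 / Real.sqrt π * Real.exp (-a^2)) a := by
  have h : HasDerivAt (fun u : ℝ => ∫ b in (0:ℝ)..u, Real.exp (-b^2)) (Real.exp (-a^2)) a :=
    intervalIntegral.integral_hasDerivAt_right (cont_gauss.intervalIntegrable _ _)
      (cont_gauss.stronglyMeasurableAtFilter _ _) cont_gauss.continuousAt
  exact h.const_mul (2 / Real.sqrt π)

lemma continuous_erf : Continuous erf := by
  have : Differentiable ℝ erf := fun a => (erf_hasDerivAt a).differentiableAt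
  exact this.continuous

lemma erf_zero : erf 0 = 0 := by simp [erf]

lemma erf_neg (a : ℝ) : erf (-a) = - erf a := by
  have h : (∫ b in (0:ℝ)..(-a), Real.exp (-b^2)) = ∫ b in (0:ℝ)..(-a), Real.exp (-(-b)^2) := by
    simp
  rw [erf, h, intervalIntegral.integral_comp_neg fun b => Real.exp (-b^2)]
  rw [neg_neg, neg_zero, erf, intervalIntegral.integral_symm 0 a]
  ring

lemma sqrt_pi_pos : 0 < Real.sqrt π := Real.sqrt_pos.2 Real.pi_pos

lemma tendsto_erf_atTop : Tendsto erf atTop (𝓝 1) := by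
  have hint : IntegrableOn (fun b : ℝ => Real.exp (-b^2)) (Ioi 0) := by
    have := (integrable_exp_neg_mul_sq (b := 1) one_pos).integrableOn (s := Ioi 0)
    simpa using this
  have h := intervalIntegral_tendsto_integral_Ioi 0 hint tendsto_id
  have hval : (∫ b in Ioi (0:ℝ), Real.exp (-b^2)) = Real.sqrt π / 2 := by
    have := integral_gaussian_Ioi 1
    simpa using this
  rw [hval] at h
  have := h.const_mul (2 / Real.sqrt π)
  have h2 : (2 / Real.sqrt π) * (Real.sqrt π / 2) = 1 := by
    field_simp
  unfold erf
  convert this using 2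
  · rfl
  · exact h2.symm

lemma tendsto_erf_atBot : Tendsto erf atBot (𝓝 (-1)) := by
  have : Tendsto (fun a : ℝ => - erf (-a)) atBot (𝓝 (-1)) := by
    have := tendsto_erf_atTop.comp tendsto_neg_atBot_atTop
    simpa using this.neg
  refine this.congr fun a => ?_
  rw [erf_neg, neg_neg]

noncomputable def F (x r : ℝ) (τ : ℝ) : ℝ :=
  (τ/2 + ((r - x)^2/4 + (r - x)^3/(6*x))) * erf ((r - x) / (2 * Real.sqrt τ))
  + (τ/2 + ((r + x)^2/4 - (r + x)^3/(6*x))) * erf ((r + x) / (2 * Real.sqrt τ))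
  + Real.sqrt τ / Real.sqrt π *
      (((r - x)/2 + (r - x)^2/(3*x) - 2*τ/(3*x)) * Real.exp (-((r - x)^2) / (4*τ))
       + ((r + x)/2 - (r + x)^2/(3*x) + 2*τ/(3*x)) * Real.exp (-((r + x)^2) / (4*τ)))

lemma F_hasDerivAt (x r : ℝ) (hx : x ≠ 0) {τ : ℝ} (hτ : 0 < τ) :
    HasDerivAt (F x r)
      ((1/2) * (erf ((r - x) / (2 * Real.sqrt τ)) + erf ((r + x) / (2 * Real.sqrt τ)))
        + (1/x) * Real.sqrt (τ/π)
            * (Real.exp (-((r + x)^2) / (4*τ)) - Real.exp (-((r - x)^2) / (4*τ)))) τ := by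
  have hτ' : τ ≠ 0 := hτ.ne'
  have hst : 0 < Real.sqrt τ := Real.sqrt_pos.2 hτ
  have hsp := sqrt_pi_pos
  have hsq : HasDerivAt Real.sqrt (1/(2*Real.sqrt τ)) τ := Real.hasDerivAt_sqrt hτ'
  -- derivative of t ↦ erf (c / (2 * √t))
  have herf : ∀ c : ℝ, HasDerivAt (fun t => erf (c / (2 * Real.sqrt t)))
      (-(c * Real.exp (-(c^2) / (4*τ))) / (2 * Real.sqrt π * τ * Real.sqrt τ)) τ := by
    intro c
    have hz : HasDerivAt (fun t => c / (2 * Real.sqrt t))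
        ((0 * (2 * Real.sqrt τ) - c * (2 * (1/(2*Real.sqrt τ)))) / (2 * Real.sqrt τ)^2) τ :=
      (hasDerivAt_const τ c).div (hsq.const_mul 2) (by positivity)
    have h := (erf_hasDerivAt (c / (2 * Real.sqrt τ))).comp τ hz
    have harg : -((c / (2 * Real.sqrt τ))^2) = -(c^2) / (4*τ) := by
      rw [div_pow, mul_pow, Real.sq_sqrt hτ.le]; ring
    rw [harg] at h
    refine h.congr_deriv ?_
    have h4 : (2 * Real.sqrt τ)^2 = 4 * τ := by
      rw [mul_pow, Real.sq_sqrt hτ.le]; norm_num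
    rw [h4]
    field_simp
    ring
  -- derivative of t ↦ exp (-(c^2) / (4*t))
  have hexp : ∀ c : ℝ, HasDerivAt (fun t : ℝ => Real.exp (-(c^2) / (4*t)))
      (Real.exp (-(c^2) / (4*τ)) * (c^2 / (4*τ^2))) τ := by
    intro c
    have hz : HasDerivAt (fun t : ℝ => -(c^2) / (4*t))
        ((0 * (4*τ) - -(c^2) * (4 * 1)) / (4*τ)^2) τ :=
      (hasDerivAt_const τ (-(c^2))).div ((hasDerivAt_id τ).const_mul 4) (by positivity)
    have h := hz.exp
    convert h using 1
    field_simp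
    ring
  have h1 : HasDerivAt (fun t : ℝ => (t/2 + ((r - x)^2/4 + (r - x)^3/(6*x))) * erf ((r - x) / (2 * Real.sqrt t)))
      (1/2 * erf ((r - x) / (2 * Real.sqrt τ))
        + (τ/2 + ((r - x)^2/4 + (r - x)^3/(6*x))) *
          (-((r - x) * Real.exp (-((r - x)^2) / (4*τ))) / (2 * Real.sqrt π * τ * Real.sqrt τ))) τ :=
    (((hasDerivAt_id τ).div_const 2).add_const _).mul (herf (r - x))
  have h2 : HasDerivAt (fun t : ℝ => (t/2 + ((r + x)^2/4 - (r + x)^3/(6*x))) * erf ((r + x) / (2 * Real.sqrt t)))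
      (1/2 * erf ((r + x) / (2 * Real.sqrt τ))
        + (τ/2 + ((r + x)^2/4 - (r + x)^3/(6*x))) *
          (-((r + x) * Real.exp (-((r + x)^2) / (4*τ))) / (2 * Real.sqrt π * τ * Real.sqrt τ))) τ :=
    (((hasDerivAt_id τ).div_const 2).add_const _).mul (herf (r + x))
  have hG : HasDerivAt (fun t : ℝ =>
      ((r - x)/2 + (r - x)^2/(3*x) - 2*t/(3*x)) * Real.exp (-((r - x)^2) / (4*t))
       + ((r + x)/2 - (r + x)^2/(3*x) + 2*t/(3*x)) * Real.exp (-((r + x)^2) / (4*t)))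
      ((-(2*1/(3*x)) * Real.exp (-((r - x)^2) / (4*τ))
         + ((r - x)/2 + (r - x)^2/(3*x) - 2*τ/(3*x)) * (Real.exp (-((r - x)^2) / (4*τ)) * ((r - x)^2 / (4*τ^2))))
       + (2*1/(3*x) * Real.exp (-((r + x)^2) / (4*τ))
         + ((r + x)/2 - (r + x)^2/(3*x) + 2*τ/(3*x)) * (Real.exp (-((r + x)^2) / (4*τ)) * ((r + x)^2 / (4*τ^2))))) τ := by
    exact (((((hasDerivAt_id τ).const_mul 2).div_const (3*x)).const_sub _).mul (hexp (r - x))).add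
      (((((hasDerivAt_id τ).const_mul 2).div_const (3*x)).const_add _).mul (hexp (r + x)))
  have h3 := (hsq.div_const (Real.sqrt π)).mul hG
  have hF : HasDerivAt (F x r) _ τ := (h1.add h2).add h3
  convert hF using 1
  rw [Real.sqrt_div hτ.le]
  set E1 := erf ((r - x) / (2 * Real.sqrt τ))
  set E2 := erf ((r + x) / (2 * Real.sqrt τ))
  set P := Real.exp (-((r - x)^2) / (4*τ))
  set Q := Real.exp (-((r + x)^2) / (4*τ))
  set v := Real.sqrt τ with hv
  have hvv : τ = v * v := by rw [hv, Real.mul_self_sqrt hτ.le]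
  rw [hvv]
  have hv0 : v ≠ 0 := ne_of_gt hst
  field_simp
  ring

noncomputable def Phi (x r : ℝ) (v : ℝ) : ℝ :=
  (v^2/2 + ((r - x)^2/4 + (r - x)^3/(6*x))) * erf ((r - x) / (2 * v))
  + (v^2/2 + ((r + x)^2/4 - (r + x)^3/(6*x))) * erf ((r + x) / (2 * v))
  + v / Real.sqrt π *
      (((r - x)/2 + (r - x)^2/(3*x) - 2*v^2/(3*x)) * Real.exp (-((r - x)^2) / (4*v^2))
       + ((r + x)/2 - (r + x)^2/(3*x) + 2*v^2/(3*x)) * Real.exp (-((r + x)^2) / (4*v^2)))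

lemma F_eq_Phi (x r : ℝ) {τ : ℝ} (hτ : 0 < τ) : F x r τ = Phi x r (Real.sqrt τ) := by
  unfold F Phi
  rw [Real.sq_sqrt hτ.le]


lemma abs_E_le (z : ℝ) : |Real.sqrt π / 2 * erf z - z| ≤ |z|^3 / 3 := by
  have hsp := sqrt_pi_pos
  have h1 : Real.sqrt π / 2 * erf z = ∫ b in (0:ℝ)..z, Real.exp (-b^2) := by
    rw [erf]; field_simp
  have h2 : Real.sqrt π / 2 * erf z - z = ∫ b in (0:ℝ)..z, (Real.exp (-b^2) - 1) := by
    rw [intervalIntegral.integral_sub (cont_gauss.intervalIntegrable _ _)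
      intervalIntegrable_const, h1]
    simp
  rw [h2]
  have key : ∀ b : ℝ, ‖Real.exp (-b^2) - 1‖ ≤ b^2 := by
    intro b
    rw [Real.norm_eq_abs, abs_sub_comm, abs_of_nonneg (by
      have : Real.exp (-b^2) ≤ 1 := Real.exp_le_one_iff.2 (by nlinarith [sq_nonneg b])
      linarith)]
    have := Real.add_one_le_exp (-b^2)
    linarith
  have hb : |∫ b in (0:ℝ)..z, (Real.exp (-b^2) - 1)| ≤ |∫ b in (0:ℝ)..z, b^2| := by
    have := intervalIntegral.norm_integral_le_abs_of_norm_le (μ := volume) (a := 0) (b := z)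
      (f := fun b => Real.exp (-b^2) - 1) (g := fun b => b^2)
      (Filter.Eventually.of_forall fun t => key t)
      ((continuous_pow 2).intervalIntegrable _ _)
    simpa using this
  refine hb.trans ?_
  rw [integral_pow]
  norm_num [abs_div, abs_pow]

lemma tendsto_zero_of_abs_le_const_div {f : ℝ → ℝ} (C : ℝ)
    (h : ∀ᶠ v in atTop, |f v| ≤ C / v) : Tendsto f atTop (𝓝 0) := by
  have hC : Tendsto (fun v : ℝ => C / v) atTop (𝓝 0) :=
    tendsto_const_nhds.div_atTop tendsto_id
  exact squeeze_zero_norm' (by simpa using h) hC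

lemma tendsto_sqrt_atTop : Tendsto Real.sqrt atTop atTop := by
  refine tendsto_atTop_atTop.2 fun b => ⟨(b ⊔ 0)^2, fun a ha => ?_⟩
  calc b ≤ b ⊔ 0 := le_max_left _ _
    _ = Real.sqrt ((b ⊔ 0)^2) := (Real.sqrt_sq (le_max_right _ _)).symm
    _ ≤ Real.sqrt a := Real.sqrt_le_sqrt ha

lemma tendsto_Phi_atTop (x r : ℝ) (hx : 0 < x) : Tendsto (Phi x r) atTop (𝓝 0) := by
  have hsp := sqrt_pi_pos
  obtain ⟨a1, ha1⟩ : ∃ a, a = (r - x)^2/4 + (r - x)^3/(6*x) := ⟨_, rfl⟩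
  obtain ⟨a2, ha2⟩ : ∃ a, a = (r + x)^2/4 - (r + x)^3/(6*x) := ⟨_, rfl⟩
  obtain ⟨b1, hb1⟩ : ∃ a, a = (r - x)/2 + (r - x)^2/(3*x) := ⟨_, rfl⟩
  obtain ⟨b2, hb2⟩ : ∃ a, a = (r + x)/2 - (r + x)^2/(3*x) := ⟨_, rfl⟩
  obtain ⟨M, hM⟩ : ∃ a, a = 1 + |r - x| + |r + x| + |a1| + |a2| + |b1| + |b2| := ⟨_, rfl⟩
  have hMnn : 1 ≤ M := by
    have := abs_nonneg (r - x); have := abs_nonneg (r + x); have := abs_nonneg a1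
    have := abs_nonneg a2; have := abs_nonneg b1; have := abs_nonneg b2
    rw [hM]; linarith
  -- E-type terms
  have hT1 : ∀ c a : ℝ, |a| ≤ M → Tendsto (fun v : ℝ =>
      (2/Real.sqrt π) * (v^2/2 + a) * (Real.sqrt π/2 * erf (c / (2*v)) - c / (2*v)))
      atTop (𝓝 0) := by
    intro c a haM
    apply tendsto_zero_of_abs_le_const_div (|c|^3/(8*Real.sqrt π))
    filter_upwards [eventually_ge_atTop M] with v hv
    have hv1 : 1 ≤ v := hMnn.trans hv
    have hv0 : 0 < v := lt_of_lt_of_le one_pos hv1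
    have hE : |Real.sqrt π/2 * erf (c / (2*v)) - c / (2*v)| ≤ |c|^3/(24*v^3) := by
      refine (abs_E_le (c / (2*v))).trans ?_
      rw [abs_div, abs_of_pos (by positivity : (0:ℝ) < 2*v)]
      rw [div_pow, div_div]
      apply le_of_eq
      rw [mul_pow]
      ring
    calc |(2/Real.sqrt π) * (v^2/2 + a) * (Real.sqrt π/2 * erf (c / (2*v)) - c / (2*v))|
        = (2/Real.sqrt π) * |v^2/2 + a| * |Real.sqrt π/2 * erf (c / (2*v)) - c / (2*v)| := by
          rw [abs_mul, abs_mul, abs_of_pos (by positivity : (0:ℝ) < 2/Real.sqrt π)]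
      _ ≤ (2/Real.sqrt π) * ((3/2) * v^2) * (|c|^3/(24*v^3)) := by
          have hav : |a| ≤ v := haM.trans hv
          have h_va : |v^2/2 + a| ≤ 3/2 * v^2 := by
            have hh1 : |v^2/2 + a| ≤ |v^2/2| + |a| := abs_add_le _ _
            have hh2 : |v^2/2| = v^2/2 := abs_of_nonneg (by positivity)
            nlinarith
          refine mul_le_mul (mul_le_mul_of_nonneg_left h_va (by positivity)) hE
            (abs_nonneg _) (by positivity)
      _ = |c|^3/(8*Real.sqrt π)/v := by field_simp; ring
  -- R-bound helper
  have hR : ∀ c : ℝ, ∀ v : ℝ, |c| ≤ v → 1 ≤ v →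
      |Real.exp (-(c^2)/(4*v^2)) - 1 + c^2/(4*v^2)| ≤ c^4/(16*v^4) := by
    intro c v hcv hv1
    have hv0 : (0:ℝ) < v := lt_of_lt_of_le one_pos hv1
    have hw : |(-(c^2)/(4*v^2))| ≤ 1 := by
      rw [abs_div, abs_neg, abs_of_nonneg (by positivity : (0:ℝ) ≤ c^2),
        abs_of_pos (by positivity : (0:ℝ) < 4*v^2)]
      rw [div_le_one (by positivity)]
      nlinarith [sq_abs c, abs_nonneg c]
    have hb := Real.abs_exp_sub_one_sub_id_le hw
    have heq : Real.exp (-(c^2)/(4*v^2)) - 1 + c^2/(4*v^2)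
        = Real.exp (-(c^2)/(4*v^2)) - 1 - (-(c^2)/(4*v^2)) := by ring
    rw [heq]
    refine hb.trans (le_of_eq ?_)
    field_simp
    ring
  have h_cd : |r - x| ≤ M := by
    have := abs_nonneg (r + x); have := abs_nonneg a1
    have := abs_nonneg a2; have := abs_nonneg b1; have := abs_nonneg b2
    rw [hM]; linarith
  have h_cs : |r + x| ≤ M := by
    have := abs_nonneg (r - x); have := abs_nonneg a1
    have := abs_nonneg a2; have := abs_nonneg b1; have := abs_nonneg b2
    rw [hM]; linarith
  have h_a1M : |a1| ≤ M := by
    have := abs_nonneg (r - x); have := abs_nonneg (r + x)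
    have := abs_nonneg a2; have := abs_nonneg b1; have := abs_nonneg b2
    rw [hM]; linarith
  have h_a2M : |a2| ≤ M := by
    have := abs_nonneg (r - x); have := abs_nonneg (r + x)
    have := abs_nonneg a1; have := abs_nonneg b1; have := abs_nonneg b2
    rw [hM]; linarith
  have h_b1M : |b1| ≤ M := by
    have := abs_nonneg (r - x); have := abs_nonneg (r + x)
    have := abs_nonneg a1; have := abs_nonneg a2; have := abs_nonneg b2
    rw [hM]; linarith
  have h_b2M : |b2| ≤ M := by
    have := abs_nonneg (r - x); have := abs_nonneg (r + x)
    have := abs_nonneg a1; have := abs_nonneg a2; have := abs_nonneg b1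
    rw [hM]; linarith
  -- the remainder (R) block
  have hT3 : Tendsto (fun v : ℝ => v/Real.sqrt π *
      ((b1 - 2*v^2/(3*x)) * (Real.exp (-((r - x)^2)/(4*v^2)) - 1 + (r - x)^2/(4*v^2))
       + (b2 + 2*v^2/(3*x)) * (Real.exp (-((r + x)^2)/(4*v^2)) - 1 + (r + x)^2/(4*v^2))))
      atTop (𝓝 0) := by
    apply tendsto_zero_of_abs_le_const_div
      ((1 + 2/(3*x)) * ((r - x)^4 + (r + x)^4)/(16*Real.sqrt π))
    filter_upwards [eventually_ge_atTop M] with v hv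
    have hv1 : 1 ≤ v := hMnn.trans hv
    have hv0 : (0:ℝ) < v := lt_of_lt_of_le one_pos hv1
    have hR1 : |Real.exp (-((r - x)^2)/(4*v^2)) - 1 + (r - x)^2/(4*v^2)| ≤ (r - x)^4/(16*v^4) :=
      hR (r - x) v (h_cd.trans hv) hv1
    have hR2 : |Real.exp (-((r + x)^2)/(4*v^2)) - 1 + (r + x)^2/(4*v^2)| ≤ (r + x)^4/(16*v^4) :=
      hR (r + x) v (h_cs.trans hv) hv1
    have hx23 : (0:ℝ) ≤ 2/(3*x) := by positivity
    have hvv : v ≤ v^2 := by nlinarith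
    have hc1 : |b1 - 2*v^2/(3*x)| ≤ v^2*(1 + 2/(3*x)) := by
      have h1 : |b1 - 2*v^2/(3*x)| ≤ |b1| + |2*v^2/(3*x)| := abs_sub b1 _
      have h2 : |2*v^2/(3*x)| = v^2*(2/(3*x)) := by
        rw [abs_of_nonneg (by positivity)]; ring
      have h3 : |b1| ≤ v := h_b1M.trans hv
      nlinarith
    have hc2 : |b2 + 2*v^2/(3*x)| ≤ v^2*(1 + 2/(3*x)) := by
      have h1 : |b2 + 2*v^2/(3*x)| ≤ |b2| + |2*v^2/(3*x)| := abs_add_le b2 _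
      have h2 : |2*v^2/(3*x)| = v^2*(2/(3*x)) := by
        rw [abs_of_nonneg (by positivity)]; ring
      have h3 : |b2| ≤ v := h_b2M.trans hv
      nlinarith
    calc |v/Real.sqrt π *
        ((b1 - 2*v^2/(3*x)) * (Real.exp (-((r - x)^2)/(4*v^2)) - 1 + (r - x)^2/(4*v^2))
         + (b2 + 2*v^2/(3*x)) * (Real.exp (-((r + x)^2)/(4*v^2)) - 1 + (r + x)^2/(4*v^2)))|
        = v/Real.sqrt π *
          |(b1 - 2*v^2/(3*x)) * (Real.exp (-((r - x)^2)/(4*v^2)) - 1 + (r - x)^2/(4*v^2))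
           + (b2 + 2*v^2/(3*x)) * (Real.exp (-((r + x)^2)/(4*v^2)) - 1 + (r + x)^2/(4*v^2))| := by
          rw [abs_mul, abs_of_pos (by positivity : (0:ℝ) < v/Real.sqrt π)]
      _ ≤ v/Real.sqrt π *
          ((v^2*(1 + 2/(3*x))) * ((r - x)^4/(16*v^4)) + (v^2*(1 + 2/(3*x))) * ((r + x)^4/(16*v^4))) := by
          refine mul_le_mul_of_nonneg_left ?_ (by positivity)
          refine (abs_add_le _ _).trans ?_
          rw [abs_mul, abs_mul]
          exact add_le_add (mul_le_mul hc1 hR1 (abs_nonneg _) (by positivity))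
            (mul_le_mul hc2 hR2 (abs_nonneg _) (by positivity))
      _ = (1 + 2/(3*x)) * ((r - x)^4 + (r + x)^4)/(16*Real.sqrt π)/v := by
          field_simp
  -- the 1/v term
  have hT4 : Tendsto (fun v : ℝ => (a1*(r - x) + a2*(r + x))/(2*Real.sqrt π*v)) atTop (𝓝 0) := by
    apply tendsto_zero_of_abs_le_const_div (|a1*(r - x) + a2*(r + x)|/(2*Real.sqrt π))
    filter_upwards [eventually_gt_atTop 0] with v hv0
    rw [abs_div, abs_of_pos (by positivity : (0:ℝ) < 2*Real.sqrt π*v), div_div]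
  have hsum := (((hT1 (r - x) a1 h_a1M).add (hT1 (r + x) a2 h_a2M)).add hT3).add hT4
  rw [show (0:ℝ) = ((0 + 0) + 0) + 0 by norm_num]
  refine Tendsto.congr' ?_ hsum
  filter_upwards [eventually_gt_atTop 0] with v hv0
  rw [ha1, ha2, hb1, hb2]
  unfold Phi
  field_simp
  ring

lemma tendsto_Phi_zero (x r : ℝ) (hx : 0 < x) (hr : 0 < r) (hrx : r < x) :
    Tendsto (Phi x r) (𝓝[>] (0:ℝ))
      (𝓝 (((r + x)^2/4 - (r + x)^3/(6*x)) - ((r - x)^2/4 + (r - x)^3/(6*x)))) := by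
  have hsp := sqrt_pi_pos
  have hd : r - x < 0 := by linarith
  have hs : 0 < r + x := by linarith
  have hinv : Tendsto (fun v : ℝ => v⁻¹) (𝓝[>] (0:ℝ)) atTop := tendsto_inv_nhdsGT_zero
  have hdiv1 : Tendsto (fun v : ℝ => (r - x)/(2*v)) (𝓝[>] (0:ℝ)) atBot := by
    have h' := (tendsto_const_mul_atBot_of_neg (show (r - x)/2 < 0 by linarith)).2 hinv
    exact h'.congr fun v => by ring
  have hdiv2 : Tendsto (fun v : ℝ => (r + x)/(2*v)) (𝓝[>] (0:ℝ)) atTop := by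
    have h' := Tendsto.const_mul_atTop (show (0:ℝ) < (r + x)/2 by linarith) hinv
    exact h'.congr fun v => by ring
  have herf1 : Tendsto (fun v : ℝ => erf ((r - x)/(2*v))) (𝓝[>] (0:ℝ)) (𝓝 (-1)) :=
    tendsto_erf_atBot.comp hdiv1
  have herf2 : Tendsto (fun v : ℝ => erf ((r + x)/(2*v))) (𝓝[>] (0:ℝ)) (𝓝 1) :=
    tendsto_erf_atTop.comp hdiv2
  have hsq : Tendsto (fun v : ℝ => v^2) (𝓝[>] (0:ℝ)) (𝓝[>] 0) := by
    rw [tendsto_nhdsWithin_iff]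
    constructor
    · have := ((continuous_pow 2 (M := ℝ)).tendsto 0).mono_left (nhdsWithin_le_nhds (s := Ioi 0))
      simpa using this
    · filter_upwards [self_mem_nhdsWithin] with t ht
      exact pow_pos (Set.mem_Ioi.mp ht) 2
  have hinv2 : Tendsto (fun v : ℝ => (v^2)⁻¹) (𝓝[>] (0:ℝ)) atTop := tendsto_inv_nhdsGT_zero.comp hsq
  have hexp1 : Tendsto (fun v : ℝ => Real.exp (-((r - x)^2)/(4*v^2))) (𝓝[>] (0:ℝ)) (𝓝 0) := by
    have hc : -((r - x)^2)/4 < 0 := by nlinarith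
    have harg : Tendsto (fun v : ℝ => -((r - x)^2)/(4*v^2)) (𝓝[>] (0:ℝ)) atBot := by
      have h' := (tendsto_const_mul_atBot_of_neg hc).2 hinv2
      exact h'.congr fun v => by ring
    exact Real.tendsto_exp_atBot.comp harg
  have hexp2 : Tendsto (fun v : ℝ => Real.exp (-((r + x)^2)/(4*v^2))) (𝓝[>] (0:ℝ)) (𝓝 0) := by
    have hc : -((r + x)^2)/4 < 0 := by nlinarith
    have harg : Tendsto (fun v : ℝ => -((r + x)^2)/(4*v^2)) (𝓝[>] (0:ℝ)) atBot := by
      have h' := (tendsto_const_mul_atBot_of_neg hc).2 hinv2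
      exact h'.congr fun v => by ring
    exact Real.tendsto_exp_atBot.comp harg
  have hcoef1 : Tendsto (fun v : ℝ => v^2/2 + ((r - x)^2/4 + (r - x)^3/(6*x))) (𝓝[>] (0:ℝ))
      (𝓝 ((r - x)^2/4 + (r - x)^3/(6*x))) := by
    have hcont : Continuous fun v : ℝ => v^2/2 + ((r - x)^2/4 + (r - x)^3/(6*x)) := by continuity
    have := (hcont.tendsto 0).mono_left (nhdsWithin_le_nhds (s := Ioi 0))
    convert this using 2
    norm_num
  have hcoef2 : Tendsto (fun v : ℝ => v^2/2 + ((r + x)^2/4 - (r + x)^3/(6*x))) (𝓝[>] (0:ℝ))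
      (𝓝 ((r + x)^2/4 - (r + x)^3/(6*x))) := by
    have hcont : Continuous fun v : ℝ => v^2/2 + ((r + x)^2/4 - (r + x)^3/(6*x)) := by continuity
    have := (hcont.tendsto 0).mono_left (nhdsWithin_le_nhds (s := Ioi 0))
    convert this using 2
    norm_num
  have hcoefb1 : Tendsto (fun v : ℝ => (r - x)/2 + (r - x)^2/(3*x) - 2*v^2/(3*x)) (𝓝[>] (0:ℝ))
      (𝓝 ((r - x)/2 + (r - x)^2/(3*x))) := by
    have hcont : Continuous fun v : ℝ => (r - x)/2 + (r - x)^2/(3*x) - 2*v^2/(3*x) := by continuity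
    have := (hcont.tendsto 0).mono_left (nhdsWithin_le_nhds (s := Ioi 0))
    convert this using 2
    norm_num
  have hcoefb2 : Tendsto (fun v : ℝ => (r + x)/2 - (r + x)^2/(3*x) + 2*v^2/(3*x)) (𝓝[>] (0:ℝ))
      (𝓝 ((r + x)/2 - (r + x)^2/(3*x))) := by
    have hcont : Continuous fun v : ℝ => (r + x)/2 - (r + x)^2/(3*x) + 2*v^2/(3*x) := by continuity
    have := (hcont.tendsto 0).mono_left (nhdsWithin_le_nhds (s := Ioi 0))
    convert this using 2
    norm_num
  have hv0 : Tendsto (fun v : ℝ => v / Real.sqrt π) (𝓝[>] (0:ℝ)) (𝓝 0) := by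
    have hcont : Continuous fun v : ℝ => v / Real.sqrt π := by continuity
    have := (hcont.tendsto 0).mono_left (nhdsWithin_le_nhds (s := Ioi 0))
    convert this using 2
    norm_num
  have big := ((hcoef1.mul herf1).add (hcoef2.mul herf2)).add
    (hv0.mul ((hcoefb1.mul hexp1).add (hcoefb2.mul hexp2)))
  have hval : (((r + x)^2/4 - (r + x)^3/(6*x)) - ((r - x)^2/4 + (r - x)^3/(6*x)))
      = ((r - x)^2/4 + (r - x)^3/(6*x)) * -1 + ((r + x)^2/4 - (r + x)^3/(6*x)) * 1
        + 0 * (((r - x)/2 + (r - x)^2/(3*x)) * 0 + ((r + x)/2 - (r + x)^2/(3*x)) * 0) := by ring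
  rw [hval]
  exact big

lemma integrand_nonneg (x r : ℝ) (hx : 0 < x) (hr : 0 < r) (hrx : r < x) {τ : ℝ} (hτ : 0 < τ) :
    0 ≤ (1/2) * (erf ((r - x) / (2 * Real.sqrt τ)) + erf ((r + x) / (2 * Real.sqrt τ)))
        + (1/x) * Real.sqrt (τ/π)
            * (Real.exp (-((r + x)^2) / (4*τ)) - Real.exp (-((r - x)^2) / (4*τ))) := by
  have hst : 0 < Real.sqrt τ := Real.sqrt_pos.2 hτ
  have hsp := sqrt_pi_pos
  obtain ⟨h, hhdef⟩ : ∃ h : ℝ → ℝ, h = fun ρ : ℝ =>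
      (1/2) * (erf ((ρ - x) / (2 * Real.sqrt τ)) + erf ((ρ + x) / (2 * Real.sqrt τ)))
        + (1/x) * Real.sqrt (τ/π)
            * (Real.exp (-((ρ + x)^2) / (4*τ)) - Real.exp (-((ρ - x)^2) / (4*τ))) := ⟨_, rfl⟩
  have hderiv : ∀ ρ : ℝ, HasDerivAt h
      ((1/2) * ((2/Real.sqrt π * Real.exp (-((ρ - x)^2) / (4*τ))) * (1/(2*Real.sqrt τ))
          + (2/Real.sqrt π * Real.exp (-((ρ + x)^2) / (4*τ))) * (1/(2*Real.sqrt τ)))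
        + ((1/x) * Real.sqrt (τ/π)) * (Real.exp (-((ρ + x)^2) / (4*τ)) * (-(2*(ρ + x))/(4*τ))
            - Real.exp (-((ρ - x)^2) / (4*τ)) * (-(2*(ρ - x))/(4*τ)))) ρ := by
    intro ρ
    have herfm : HasDerivAt (fun ρ : ℝ => erf ((ρ - x) / (2 * Real.sqrt τ)))
        ((2/Real.sqrt π * Real.exp (-((ρ - x)^2) / (4*τ))) * (1/(2*Real.sqrt τ))) ρ := by
      have hz : HasDerivAt (fun ρ : ℝ => (ρ - x) / (2 * Real.sqrt τ)) (1/(2*Real.sqrt τ)) ρ :=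
        ((hasDerivAt_id ρ).sub_const x).div_const _
      have hcomp := (erf_hasDerivAt ((ρ - x) / (2 * Real.sqrt τ))).comp ρ hz
      rw [show -(((ρ - x) / (2 * Real.sqrt τ))^2) = -((ρ - x)^2) / (4*τ) by
        rw [div_pow, mul_pow, Real.sq_sqrt hτ.le]; ring] at hcomp
      exact hcomp
    have herfp : HasDerivAt (fun ρ : ℝ => erf ((ρ + x) / (2 * Real.sqrt τ)))
        ((2/Real.sqrt π * Real.exp (-((ρ + x)^2) / (4*τ))) * (1/(2*Real.sqrt τ))) ρ := by
      have hz : HasDerivAt (fun ρ : ℝ => (ρ + x) / (2 * Real.sqrt τ)) (1/(2*Real.sqrt τ)) ρ := by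
        have := ((hasDerivAt_id ρ).add_const x).div_const (2 * Real.sqrt τ)
        simpa using this
      have hcomp := (erf_hasDerivAt ((ρ + x) / (2 * Real.sqrt τ))).comp ρ hz
      rw [show -(((ρ + x) / (2 * Real.sqrt τ))^2) = -((ρ + x)^2) / (4*τ) by
        rw [div_pow, mul_pow, Real.sq_sqrt hτ.le]; ring] at hcomp
      exact hcomp
    have hexpp : HasDerivAt (fun ρ : ℝ => Real.exp (-((ρ + x)^2) / (4*τ)))
        (Real.exp (-((ρ + x)^2) / (4*τ)) * (-(2*(ρ + x))/(4*τ))) ρ := by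
      have hsqp : HasDerivAt (fun ρ : ℝ => (ρ + x)^2) (2*(ρ + x)) ρ := by
        have := ((hasDerivAt_id ρ).add_const x).pow 2
        exact this.congr_deriv (by simp)
      exact (hsqp.neg.div_const (4*τ)).exp
    have hexpm : HasDerivAt (fun ρ : ℝ => Real.exp (-((ρ - x)^2) / (4*τ)))
        (Real.exp (-((ρ - x)^2) / (4*τ)) * (-(2*(ρ - x))/(4*τ))) ρ := by
      have hsqp : HasDerivAt (fun ρ : ℝ => (ρ - x)^2) (2*(ρ - x)) ρ := by
        have := ((hasDerivAt_id ρ).sub_const x).pow 2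
        exact this.congr_deriv (by simp)
      exact (hsqp.neg.div_const (4*τ)).exp
    have := ((herfm.add herfp).const_mul (1/2)).add
      ((hexpp.sub hexpm).const_mul ((1/x) * Real.sqrt (τ/π)))
    rw [hhdef]
    exact this
  have key : ∀ ρ ∈ interior (Icc (0:ℝ) r), 0 ≤ deriv h ρ := by
    intro ρ hρ
    rw [interior_Icc] at hρ
    rw [(hderiv ρ).deriv]
    have hnice : (1/2) * ((2/Real.sqrt π * Real.exp (-((ρ - x)^2) / (4*τ))) * (1/(2*Real.sqrt τ))
          + (2/Real.sqrt π * Real.exp (-((ρ + x)^2) / (4*τ))) * (1/(2*Real.sqrt τ)))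
        + ((1/x) * Real.sqrt (τ/π)) * (Real.exp (-((ρ + x)^2) / (4*τ)) * (-(2*(ρ + x))/(4*τ))
            - Real.exp (-((ρ - x)^2) / (4*τ)) * (-(2*(ρ - x))/(4*τ)))
        = ρ * (Real.exp (-((ρ - x)^2) / (4*τ)) - Real.exp (-((ρ + x)^2) / (4*τ)))
            / (2*x*Real.sqrt π*Real.sqrt τ) := by
      rw [Real.sqrt_div hτ.le]
      obtain ⟨P, hP⟩ : ∃ a, a = Real.exp (-((ρ - x)^2) / (4*τ)) := ⟨_, rfl⟩
      obtain ⟨Q, hQ⟩ : ∃ a, a = Real.exp (-((ρ + x)^2) / (4*τ)) := ⟨_, rfl⟩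
      rw [← hP, ← hQ]
      obtain ⟨v, hv⟩ : ∃ a, a = Real.sqrt τ := ⟨_, rfl⟩
      rw [← hv]
      have hvpos : 0 < v := hv ▸ hst
      have hvv : τ = v * v := by rw [hv, Real.mul_self_sqrt hτ.le]
      rw [hvv]
      field_simp
      ring
    rw [hnice]
    have hρ0 : 0 ≤ ρ := hρ.1.le
    have hle : Real.exp (-((ρ + x)^2) / (4*τ)) ≤ Real.exp (-((ρ - x)^2) / (4*τ)) := by
      apply Real.exp_le_exp.2
      rw [div_le_div_iff_of_pos_right (by positivity)]
      nlinarith [hρ.1, hx]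
    have hPQ : 0 ≤ Real.exp (-((ρ - x)^2) / (4*τ)) - Real.exp (-((ρ + x)^2) / (4*τ)) := by linarith
    exact div_nonneg (mul_nonneg hρ0 hPQ) (by positivity)
  have hdiff : Differentiable ℝ h := fun ρ => (hderiv ρ).differentiableAt
  have mono : MonotoneOn h (Icc 0 r) :=
    monotoneOn_of_deriv_nonneg (convex_Icc 0 r) hdiff.continuous.continuousOn
      hdiff.differentiableOn key
  have h0r : h 0 ≤ h r := mono (left_mem_Icc.2 hr.le) (right_mem_Icc.2 hr.le) hr.le
  have hh0 : h 0 = 0 := by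
    have e1 : ((0:ℝ) - x)/(2*Real.sqrt τ) = -(x/(2*Real.sqrt τ)) := by ring
    have e2 : ((0:ℝ) + x)/(2*Real.sqrt τ) = x/(2*Real.sqrt τ) := by ring
    have e3 : (-(((0:ℝ) + x)^2)/(4*τ)) = (-(((0:ℝ) - x)^2)/(4*τ)) := by ring
    simp only [hhdef]
    rw [e1, e2, e3, erf_neg]
    ring
  have hhr : h r = (1/2) * (erf ((r - x) / (2 * Real.sqrt τ)) + erf ((r + x) / (2 * Real.sqrt τ)))
        + (1/x) * Real.sqrt (τ/π)
            * (Real.exp (-((r + x)^2) / (4*τ)) - Real.exp (-((r - x)^2) / (4*τ))) := by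
    simp only [hhdef]
  linarith [hh0 ▸ h0r, hhr ▸ h0r]


/-- For a noise source strictly outside the receiver, the asymptotic impact in the absence of
advection and molecule degradation is `r_obs³/(3 x_n)`. -/
theorem asymptotic_impact_source_outside_receiver (x_n r_obs r_dif r_sum : ℝ)
    (hr : 0 < r_obs) (hx : r_obs < x_n)
    (hdif : r_dif = r_obs - x_n) (hsum : r_sum = r_obs + x_n) :
    ∫ τ in Set.Ioi (0:ℝ),
      ((1/2) * (erf ((r_obs - x_n) / (2 * Real.sqrt τ))
                 + erf ((r_obs + x_n) / (2 * Real.sqrt τ)))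
        + (1/x_n) * Real.sqrt (τ/π)
            * (Real.exp (-(r_sum^2) / (4*τ)) - Real.exp (-(r_dif^2) / (4*τ))))
    = r_obs^3 / (3*x_n) := by
  subst hdif hsum
  have hx0 : 0 < x_n := hr.trans hx
  have hxne : x_n ≠ 0 := ne_of_gt hx0
  obtain ⟨L, hL⟩ : ∃ a, a = (((r_obs + x_n)^2/4 - (r_obs + x_n)^3/(6*x_n))
      - ((r_obs - x_n)^2/4 + (r_obs - x_n)^3/(6*x_n))) := ⟨_, rfl⟩
  obtain ⟨g, hg⟩ : ∃ g : ℝ → ℝ, g = fun τ => if τ ≤ 0 then L else F x_n r_obs τ := ⟨_, rfl⟩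
  have hg0 : g 0 = L := by rw [hg]; simp
  have hgF : ∀ ⦃τ : ℝ⦄, 0 < τ → g τ = F x_n r_obs τ := by
    intro τ hτ
    rw [hg]
    simp [not_le.2 hτ]
  have hderiv : ∀ τ ∈ Set.Ioi (0:ℝ), HasDerivAt g
      ((1/2) * (erf ((r_obs - x_n) / (2 * Real.sqrt τ))
                 + erf ((r_obs + x_n) / (2 * Real.sqrt τ)))
        + (1/x_n) * Real.sqrt (τ/π)
            * (Real.exp (-((r_obs + x_n)^2) / (4*τ)) - Real.exp (-((r_obs - x_n)^2) / (4*τ)))) τ := by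
    intro τ hτ
    refine (F_hasDerivAt x_n r_obs hxne hτ).congr_of_eventuallyEq ?_
    filter_upwards [isOpen_Ioi.mem_nhds hτ] with t ht
    exact hgF ht
  have hpos : ∀ τ ∈ Set.Ioi (0:ℝ), 0 ≤
      ((1/2) * (erf ((r_obs - x_n) / (2 * Real.sqrt τ))
                 + erf ((r_obs + x_n) / (2 * Real.sqrt τ)))
        + (1/x_n) * Real.sqrt (τ/π)
            * (Real.exp (-((r_obs + x_n)^2) / (4*τ)) - Real.exp (-((r_obs - x_n)^2) / (4*τ)))) :=
    fun τ hτ => integrand_nonneg x_n r_obs hx0 hr hx hτ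
  have hsqmap : Tendsto Real.sqrt (𝓝[>] (0:ℝ)) (𝓝[>] (0:ℝ)) := by
    rw [tendsto_nhdsWithin_iff]
    constructor
    · have := (Real.continuous_sqrt.tendsto 0).mono_left (nhdsWithin_le_nhds (s := Set.Ioi 0))
      simpa using this
    · filter_upwards [self_mem_nhdsWithin] with t ht
      exact Real.sqrt_pos.2 ht
  have hcont : ContinuousWithinAt g (Set.Ici 0) 0 := by
    have h1 : Tendsto g (𝓝[>] (0:ℝ)) (𝓝 L) := by
      have h2 := (tendsto_Phi_zero x_n r_obs hx0 hr hx).comp hsqmap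
      rw [← hL] at h2
      refine h2.congr' ?_
      filter_upwards [self_mem_nhdsWithin] with t ht
      rw [hgF ht]
      exact (F_eq_Phi _ _ ht).symm
    unfold ContinuousWithinAt
    rw [hg0, show (Set.Ici (0:ℝ)) = Set.Ioi 0 ∪ {0} from (Set.Ioi_union_left).symm,
      nhdsWithin_union]
    rw [tendsto_sup]
    refine ⟨h1, ?_⟩
    rw [nhdsWithin_singleton]
    simpa [hg0] using tendsto_pure_nhds g 0
  have htop : Tendsto g atTop (𝓝 0) := by
    have h2 := (tendsto_Phi_atTop x_n r_obs hx0).comp _root_.tendsto_sqrt_atTop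
    refine h2.congr' ?_
    filter_upwards [eventually_gt_atTop 0] with t ht
    rw [hgF ht]
    exact (F_eq_Phi _ _ ht).symm
  have Hmain : (∫ τ in Set.Ioi (0:ℝ),
      ((1/2) * (erf ((r_obs - x_n) / (2 * Real.sqrt τ))
                 + erf ((r_obs + x_n) / (2 * Real.sqrt τ)))
        + (1/x_n) * Real.sqrt (τ/π)
            * (Real.exp (-((r_obs + x_n)^2) / (4*τ)) - Real.exp (-((r_obs - x_n)^2) / (4*τ)))))
      = 0 - g 0 :=
    integral_Ioi_of_hasDerivAt_of_nonneg hcont hderiv hpos htop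
  rw [Hmain, hg0, hL]
  field_simp
  ring
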